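/- Let 1 ≤ p ≤ q < ∞. For any sequence x = (x_j)_{j∈ℤ}, the norms ‖x‖_{ℓ^p_q} (over symmetric index sets of odd cardinality) and ‖x‖*_{ℓ^p_q} (over arbitrary index intervals) satisfy ‖x‖_{ℓ^p_q} ≤ ‖x‖*_{ℓ^p_q} ≤ (3/2)^{1/p−1/q} ‖x‖_{ℓ^p_q}. -/

import Mathlib

open scoped ENNReal BigOperators

/-- Discrete Morrey norm over symmetric index sets `S_{m,N} = {m-N, …, m+N}`. -/
noncomputable def dnorm (p q : ℝ) (x : ℤ → ℝ) : ℝ≥0∞ :=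
  ⨆ (m : ℤ) (N : ℕ), ((2 * N + 1 : ℝ≥0∞) ^ (1 / q - 1 / p)) *
    ENNReal.ofReal ((∑ j ∈ Finset.Icc (m - N) (m + N), |x j| ^ p) ^ (1 / p))

/-- Discrete Morrey norm over arbitrary index intervals `S*_{k,n} = {k, …, k+n}`. -/
noncomputable def dnormStar (p q : ℝ) (x : ℤ → ℝ) : ℝ≥0∞ :=
  ⨆ (k : ℤ) (n : ℕ), ((n + 1 : ℝ≥0∞) ^ (1 / q - 1 / p)) *
    ENNReal.ofReal ((∑ j ∈ Finset.Icc k (k + n), |x j| ^ p) ^ (1 / p))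

/-- Morrey norm on the real line. -/
noncomputable def mnormR (p q : ℝ) (f : ℝ → ℝ) : ℝ≥0∞ :=
  ⨆ (a : ℝ) (r : Set.Ioi (0 : ℝ)),
    ENNReal.ofReal ((2 * r.1) ^ (1 / q - 1 / p) *
      (∫ t in (a - r.1)..(a + r.1), |f t| ^ p) ^ (1 / p))

/-- The step function `x̃(t) = ∑_j x_j χ_{[j,j+1)}(t)`, i.e. `x̃(t) = x ⌊t⌋`. -/
noncomputable def step (x : ℤ → ℝ) : ℝ → ℝ := fun t => x ⌊t⌋

/-- The set `S_n = {1 + 2^v + ⋯ + 2^{(n-1)v} + j·2^{nw} : j = 1, …, 2^{n(v-w)}}`. -/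
def Sn (v w n : ℕ) : Set ℤ :=
  {m | ∃ j : ℕ, 1 ≤ j ∧ j ≤ 2 ^ (n * (v - w)) ∧
    m = ((∑ i ∈ Finset.range n, 2 ^ (i * v) : ℕ) : ℤ) + (j : ℤ) * 2 ^ (n * w)}

/-- The sequence with `x_j = 1` iff `j ∈ {0,1} ∪ ⋃_{n≥1} S_n`, `x_j = 0` otherwise. -/
noncomputable def xseq (v w : ℕ) : ℤ → ℝ :=
  Set.indicator (({0, 1} : Set ℤ) ∪ ⋃ n ∈ Set.Ici 1, Sn v w n) 1

/-- `β_n = 1 + 2^v + ⋯ + 2^{nv}`. -/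
def beta (v n : ℕ) : ℕ := ∑ i ∈ Finset.range (n + 1), 2 ^ (i * v)

private lemma coefR (p q : ℝ) (hp : 1 ≤ p) (hpq : p ≤ q) (N : ℕ) :
    ((2*N+1:ℝ)+1) ^ (1/q-1/p) ≤ (3/2:ℝ) ^ (1/p-1/q) * (2*((N:ℝ)+1)+1) ^ (1/q-1/p) := by
  have hp0 : 0 < p := by linarith
  have hα : 1/q - 1/p ≤ 0 := by
    have := one_div_le_one_div_of_le hp0 hpq; linarith
  set α := 1/q - 1/p with hαdef
  have hb : (0:ℝ) < (2/3) * (2*((N:ℝ)+1)+1) := by positivity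
  have hle : (2/3) * (2*((N:ℝ)+1)+1) ≤ (2*N+1:ℝ)+1 := by nlinarith [N.cast_nonneg (α := ℝ)]
  have h1 : ((2*N+1:ℝ)+1) ^ α ≤ ((2/3) * (2*((N:ℝ)+1)+1)) ^ α :=
    Real.rpow_le_rpow_of_nonpos hb hle hα
  have h2 : ((2/3:ℝ) * (2*((N:ℝ)+1)+1)) ^ α = (2/3:ℝ)^α * (2*((N:ℝ)+1)+1)^α :=
    Real.mul_rpow (by norm_num) (by positivity)
  have h3 : (2/3:ℝ)^α = (3/2:ℝ)^(1/p-1/q) := by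
    rw [show (2/3:ℝ) = (3/2:ℝ)⁻¹ by norm_num, Real.inv_rpow (by norm_num),
      ← Real.rpow_neg (by norm_num)]
    rw [hαdef]; ring_nf
  calc ((2*N+1:ℝ)+1) ^ α ≤ _ := h1
    _ = _ := by rw [h2, h3]

theorem stmt3 (p q : ℝ) (hp : 1 ≤ p) (hpq : p ≤ q) (x : ℤ → ℝ) :
    dnorm p q x ≤ dnormStar p q x ∧
      dnormStar p q x ≤ ENNReal.ofReal ((3 / 2 : ℝ) ^ (1 / p - 1 / q)) * dnorm p q x := by
  have hp0 : 0 < p := by linarith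
  have hq0 : 0 < q := by linarith
  have hβ : 0 ≤ 1/p - 1/q := by
    have := one_div_le_one_div_of_le hp0 hpq; linarith
  constructor
  · rw [dnorm, dnormStar]
    refine iSup₂_le fun m N => ?_
    refine le_trans (le_of_eq ?_) (le_iSup₂ (m - (N:ℤ)) (2*N))
    have h1 : (m:ℤ) - N + ((2*N:ℕ):ℤ) = m + N := by push_cast; ring
    rw [h1]
    congr 2
    push_cast
    ring
  · set C := ENNReal.ofReal ((3 / 2 : ℝ) ^ (1 / p - 1 / q)) with hC
    have hC1 : 1 ≤ C := by
      rw [hC, ← ENNReal.ofReal_one]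
      exact ENNReal.ofReal_le_ofReal (Real.one_le_rpow (by norm_num) hβ)
    rw [dnormStar]
    refine iSup₂_le fun k n => ?_
    rcases Nat.even_or_odd n with ⟨N, hN⟩ | ⟨N, hN⟩
    · -- even: n = N + N
      have heq : ((n:ℝ≥0∞) + 1) ^ (1 / q - 1 / p) *
          ENNReal.ofReal ((∑ j ∈ Finset.Icc k (k + n), |x j| ^ p) ^ (1 / p)) =
          (2 * (N:ℝ≥0∞) + 1) ^ (1 / q - 1 / p) *
          ENNReal.ofReal ((∑ j ∈ Finset.Icc ((k + N) - N) ((k + N) + N), |x j| ^ p) ^ (1 / p)) := by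
        have h1 : (k:ℤ) + (n:ℤ) = (k + N) + N := by push_cast [hN]; ring
        have h2 : (k:ℤ) = (k + N) - N := by ring
        rw [h1, ← h2]
        congr 2
        push_cast [hN]
        ring
      rw [heq]
      refine le_trans (le_iSup₂ (f := fun (m : ℤ) (N : ℕ) =>
        (2 * (N:ℝ≥0∞) + 1) ^ (1 / q - 1 / p) *
        ENNReal.ofReal ((∑ j ∈ Finset.Icc (m - N) (m + N), |x j| ^ p) ^ (1 / p)))
        (k + (N:ℤ)) N) ?_
      exact le_mul_of_one_le_left zero_le' hC1
    · -- odd: n = 2*N + 1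
      have hsub : Finset.Icc k (k + (n:ℤ)) ⊆
          Finset.Icc ((k + (N:ℤ)) - ((N+1:ℕ):ℤ)) ((k + (N:ℤ)) + ((N+1:ℕ):ℤ)) := by
        apply Finset.Icc_subset_Icc <;> · push_cast [hN]; omega
      have hS : ENNReal.ofReal ((∑ j ∈ Finset.Icc k (k + (n:ℤ)), |x j| ^ p) ^ (1 / p)) ≤
          ENNReal.ofReal ((∑ j ∈ Finset.Icc ((k + (N:ℤ)) - ((N+1:ℕ):ℤ))
            ((k + (N:ℤ)) + ((N+1:ℕ):ℤ)), |x j| ^ p) ^ (1 / p)) := by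
        apply ENNReal.ofReal_le_ofReal
        apply Real.rpow_le_rpow (Finset.sum_nonneg fun j _ => Real.rpow_nonneg (abs_nonneg _) p)
          ?_ (by positivity)
        exact Finset.sum_le_sum_of_subset_of_nonneg hsub
          (fun j _ _ => Real.rpow_nonneg (abs_nonneg _) p)
      have hcoef : ((n:ℝ≥0∞) + 1) ^ (1 / q - 1 / p) ≤
          C * (2 * ((N+1:ℕ):ℝ≥0∞) + 1) ^ (1 / q - 1 / p) := by
        have e1 : ((n:ℝ≥0∞) + 1) = ENNReal.ofReal ((2*N+1:ℝ)+1) := by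
          rw [show ((2:ℝ)*N+1+1) = ((2*N+2:ℕ):ℝ) by push_cast; ring, ENNReal.ofReal_natCast]
          push_cast [hN]; ring
        have e2 : (2 * ((N+1:ℕ):ℝ≥0∞) + 1) = ENNReal.ofReal (2*((N:ℝ)+1)+1) := by
          rw [show ((2:ℝ)*((N:ℝ)+1)+1) = ((2*(N+1)+1:ℕ):ℝ) by push_cast; ring,
            ENNReal.ofReal_natCast]
          push_cast; ring
        rw [e1, e2, ENNReal.ofReal_rpow_of_pos (by positivity),
          ENNReal.ofReal_rpow_of_pos (by positivity), hC,
          ← ENNReal.ofReal_mul (by positivity)]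
        exact ENNReal.ofReal_le_ofReal (coefR p q hp hpq N)
      calc ((n:ℝ≥0∞) + 1) ^ (1 / q - 1 / p) *
            ENNReal.ofReal ((∑ j ∈ Finset.Icc k (k + n), |x j| ^ p) ^ (1 / p))
          ≤ (C * (2 * ((N+1:ℕ):ℝ≥0∞) + 1) ^ (1 / q - 1 / p)) *
            ENNReal.ofReal ((∑ j ∈ Finset.Icc ((k + (N:ℤ)) - ((N+1:ℕ):ℤ))
              ((k + (N:ℤ)) + ((N+1:ℕ):ℤ)), |x j| ^ p) ^ (1 / p)) := mul_le_mul' hcoef hS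
        _ = C * ((2 * ((N+1:ℕ):ℝ≥0∞) + 1) ^ (1 / q - 1 / p) *
            ENNReal.ofReal ((∑ j ∈ Finset.Icc ((k + (N:ℤ)) - ((N+1:ℕ):ℤ))
              ((k + (N:ℤ)) + ((N+1:ℕ):ℤ)), |x j| ^ p) ^ (1 / p))) := by rw [mul_assoc]
        _ ≤ C * dnorm p q x := by
            refine mul_le_mul_right ?_ C
            rw [dnorm]
            exact le_iSup₂ (f := fun (m : ℤ) (N : ℕ) =>
              (2 * (N:ℝ≥0∞) + 1) ^ (1 / q - 1 / p) *
              ENNReal.ofReal ((∑ j ∈ Finset.Icc (m - N) (m + N), |x j| ^ p) ^ (1 / p)))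
              (k + (N:ℤ)) (N+1)
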